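/- Let Γ be a connected finite simplicial graph with at least two vertices and let v, w be vertices. Then lk(v) ⊆ st(w) holds if and only if exactly one of the following holds: (1) v = w; (2) d(v,w) = 1 and st(v) ⊆ st(w); (3) d(v,w) = 2 and lk(v) ⊆ lk(w). -/

import Mathlib

open SimpleGraph

namespace RaagPaper

variable {V : Type*}

/-- The link of a vertex: the set of vertices adjacent to it. -/
def lk (G : SimpleGraph V) (v : V) : Set V := G.neighborSet v

/-- The (closed) star of a vertex: `st(v) = lk(v) ∪ {v}`. -/
def st (G : SimpleGraph V) (v : V) : Set V := insert v (G.neighborSet v)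

/-- The preorder on vertices: `v ≤ w` iff `lk(v) ⊆ st(w)`. -/
def vle (G : SimpleGraph V) (v w : V) : Prop := lk G v ⊆ st G w

/-- Equivalence of vertices: `v ∼ w` iff `v ≤ w` and `w ≤ v`. -/
def vequiv (G : SimpleGraph V) (v w : V) : Prop := vle G v w ∧ vle G w v

/-- The equivalence class `[v]` of a vertex `v`. -/
def cls (G : SimpleGraph V) (v : V) : Set V := {u | vequiv G u v}

/-- `[v]` is maximal with respect to the partial order induced by `≤`. -/
def IsMaximalClass (G : SimpleGraph V) (v : V) : Prop := ∀ w, vle G v w → vle G w v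

/-- `L_[v] = lk(v) \ [v]`. -/
def Lset (G : SimpleGraph V) (v : V) : Set V := lk G v \ cls G v

/-- `J_[v] = [v] ∪ L_[v]`, the join associated to `[v]`. -/
def Jset (G : SimpleGraph V) (v : V) : Set V := cls G v ∪ Lset G v

/-- `v ∈ V_ab` : any two distinct vertices of `[v]` are adjacent (so `A_[v]` is abelian). -/
def Vab (G : SimpleGraph V) (v : V) : Prop :=
  ∀ x ∈ cls G v, ∀ y ∈ cls G v, x ≠ y → G.Adj x y

/-- `lk(v) ⊆ st(w)` iff exactly one of the following holds:
(1) `v = w`; (2) `d(v,w) = 1` and `st(v) ⊆ st(w)`; (3) `d(v,w) = 2` and `lk(v) ⊆ lk(w)`. -/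
theorem vle_iff_trichotomy {V : Type*} [Fintype V] [Nontrivial V] (G : SimpleGraph V)
    (hconn : G.Connected) (v w : V) :
    vle G v w ↔
      ((v = w ∧ ¬(G.dist v w = 1 ∧ st G v ⊆ st G w) ∧ ¬(G.dist v w = 2 ∧ lk G v ⊆ lk G w)) ∨
       (v ≠ w ∧ (G.dist v w = 1 ∧ st G v ⊆ st G w) ∧ ¬(G.dist v w = 2 ∧ lk G v ⊆ lk G w)) ∨
       (v ≠ w ∧ ¬(G.dist v w = 1 ∧ st G v ⊆ st G w) ∧ (G.dist v w = 2 ∧ lk G v ⊆ lk G w))) := by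
  constructor
  · intro h
    by_cases hvw : v = w
    · subst hvw
      refine Or.inl ⟨rfl, ?_, ?_⟩ <;> simp [SimpleGraph.dist_self]
    · by_cases hadj : G.Adj v w
      · have hd1 : G.dist v w = 1 := SimpleGraph.dist_eq_one_iff_adj.mpr hadj
        refine Or.inr (Or.inl ⟨hvw, ⟨hd1, ?_⟩, by simp [hd1]⟩)
        intro x hx
        rcases hx with hx | hx
        · subst hx; exact Or.inr hadj.symm
        · exact h hx
      · -- not adjacent, v ≠ w
        have hlk : lk G v ⊆ lk G w := by
          intro x hx
          rcases h hx with hx' | hx'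
          · exact absurd (hx' ▸ hx : G.Adj v w) hadj
          · exact hx'
        have hd1 : G.dist v w ≠ 1 := fun h1 =>
          hadj (SimpleGraph.dist_eq_one_iff_adj.mp h1)
        -- find a neighbor of v
        obtain ⟨u, hu⟩ := exists_ne v
        have hr : G.Reachable v u := hconn v u
        obtain ⟨p⟩ := hr
        have hnn : ¬ p.Nil := SimpleGraph.Walk.not_nil_of_ne (Ne.symm hu)
        have hadju : G.Adj v (p.getVert 1) := p.adj_snd hnn
        have hd2 : G.dist v w = 2 := by
          have hle : G.dist v w ≤ 2 := by
            have h1 : G.dist v (p.getVert 1) ≤ 1 := by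
              rw [SimpleGraph.dist_eq_one_iff_adj.mpr hadju]
            have h2 : G.dist (p.getVert 1) w ≤ 1 := by
              have : G.Adj (p.getVert 1) w := (hlk hadju).symm
              rw [SimpleGraph.dist_eq_one_iff_adj.mpr this]
            calc G.dist v w ≤ G.dist v (p.getVert 1) + G.dist (p.getVert 1) w :=
                  hconn.dist_triangle
              _ ≤ 2 := by omega
          have hpos : 0 < G.dist v w := hconn.pos_dist_of_ne hvw
          omega
        exact Or.inr (Or.inr ⟨hvw, fun hc => hd1 hc.1, hd2, hlk⟩)
  · rintro (⟨rfl, -, -⟩ | ⟨-, ⟨-, hst⟩, -⟩ | ⟨-, -, -, hlk⟩)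
    · intro x hx; exact Or.inr hx
    · intro x hx; exact hst (Or.inr hx)
    · intro x hx; exact Or.inr (hlk hx)

end RaagPaper
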